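/- For every integer n > 2 with n ≡ 0, 2, or 6 (mod 8), the Weierstrass group W_n contains a special element: there exists γ ∈ W_n with |tr γ| > 2 and a rational number x such that (x, 1) is an eigenvector of γ. -/

import Mathlib

noncomputable section

open Matrix

abbrev SL2R := Matrix.SpecialLinearGroup (Fin 2) ℝ

/-- Generator `a` of the Weierstrass groups. -/
def Wa : SL2R := ⟨!![1, 2; -1, -1], by norm_num [Matrix.det_fin_two_of]⟩

/-- Generator `b = √n · [[1,1],[-(n+1)/n,-1]]` of the `n`-th Weierstrass group. -/
def Wb (n : ℕ) (hn : 0 < n) : SL2R :=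
  ⟨Real.sqrt n • !![1, 1; -((n : ℝ) + 1) / n, -1], by
    have h0 : (0:ℝ) ≤ n := Nat.cast_nonneg n
    have hne : (n : ℝ) ≠ 0 := Nat.cast_ne_zero.mpr hn.ne'
    have h : Real.sqrt n ^ 2 = n := Real.sq_sqrt h0
    rw [Matrix.det_smul]
    simp only [Matrix.det_fin_two_of, Fintype.card_fin]
    field_simp
    rw [h]; ring⟩

/-- Generator `c = (1/√n) · [[0,n],[-1,0]]` of the `n`-th Weierstrass group. -/
def Wc (n : ℕ) (hn : 0 < n) : SL2R :=
  ⟨(1 / Real.sqrt n) • !![0, (n : ℝ); -1, 0], by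
    have h0 : (0:ℝ) ≤ n := Nat.cast_nonneg n
    have hne : (n : ℝ) ≠ 0 := Nat.cast_ne_zero.mpr hn.ne'
    have h : Real.sqrt n ^ 2 = n := Real.sq_sqrt h0
    have hs : Real.sqrt n ≠ 0 := by
      intro hs; rw [hs] at h; simp at h; exact hne h.symm
    rw [Matrix.det_smul]
    simp only [Matrix.det_fin_two_of, Fintype.card_fin]
    field_simp
    rw [h]; ring⟩

/-- The `n`-th Weierstrass group. -/
def W (n : ℕ) (hn : 0 < n) : Subgroup SL2R :=
  Subgroup.closure {Wa, Wb n hn, Wc n hn}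

/-- `γ` fixes the boundary point `x ∈ ℝ`: `(x,1)` is an eigenvector of `γ`. -/
def FixesBoundary (γ : SL2R) (x : ℝ) : Prop :=
  ∃ t : ℝ, t ≠ 0 ∧ (γ : Matrix (Fin 2) (Fin 2) ℝ).mulVec ![x, 1] = t • ![x, 1]

/-- `γ` fixes the boundary point `∞`: `(1,0)` is an eigenvector of `γ`. -/
def FixesInfty (γ : SL2R) : Prop :=
  ∃ t : ℝ, t ≠ 0 ∧ (γ : Matrix (Fin 2) (Fin 2) ℝ).mulVec ![1, 0] = t • ![1, 0]

/-- `γ ∈ SL(2,ℝ)` is parabolic: `γ ≠ ±1` and `|tr γ| = 2`. -/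
def IsParabolic (γ : SL2R) : Prop :=
  γ ≠ 1 ∧ γ ≠ -1 ∧ |Matrix.trace (γ : Matrix (Fin 2) (Fin 2) ℝ)| = 2

/-- `γ ∈ SL(2,ℝ)` is hyperbolic: `|tr γ| > 2`. -/
def IsHyperbolic (γ : SL2R) : Prop :=
  2 < |Matrix.trace (γ : Matrix (Fin 2) (Fin 2) ℝ)|

section helper
variable (n : ℕ) (hn : 0 < n)

lemma hNne (hn : 0 < n) : (n:ℝ) ≠ 0 := Nat.cast_ne_zero.mpr (Nat.pos_iff_ne_zero.mp hn)

lemma hss : Real.sqrt n * Real.sqrt n = n := Real.mul_self_sqrt (Nat.cast_nonneg n)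

lemma hsne (hn : 0 < n) : Real.sqrt n ≠ 0 := by
  intro hs
  have := hss n
  rw [hs, mul_zero] at this
  exact hNne n hn this.symm


lemma hWaval : (Wa : Matrix (Fin 2) (Fin 2) ℝ) = !![1, 2; -1, -1] := rfl

lemma hWbval : (Wb n hn : Matrix (Fin 2) (Fin 2) ℝ)
    = Real.sqrt n • !![1, 1; -((n : ℝ) + 1) / n, -1] := rfl

lemma hWcval : (Wc n hn : Matrix (Fin 2) (Fin 2) ℝ)
    = (1 / Real.sqrt n) • !![0, (n : ℝ); -1, 0] := rfl

lemma hP : (↑(Wa * Wb n hn) : Matrix (Fin 2) (Fin 2) ℝ)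
    = Real.sqrt n • !![-((n:ℝ)+2)/n, -1; 1/n, 0] := by
  have hne := hNne n hn
  rw [Matrix.SpecialLinearGroup.coe_mul, hWaval, hWbval, mul_smul_comm]
  congr 1
  ext i j
  fin_cases i <;> fin_cases j <;>
    (simp [Matrix.mul_apply, Fin.sum_univ_two]; (try field_simp); (try ring))

lemma hQ : (↑(Wa * Wc n hn) : Matrix (Fin 2) (Fin 2) ℝ)
    = (1 / Real.sqrt n) • !![(-2:ℝ), (n:ℝ); 1, -(n:ℝ)] := by
  rw [Matrix.SpecialLinearGroup.coe_mul, hWaval, hWcval, mul_smul_comm]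
  congr 1
  ext i j
  fin_cases i <;> fin_cases j <;>
    (simp [Matrix.mul_apply, Fin.sum_univ_two]; (try ring))

lemma hP2 : (↑((Wa * Wb n hn) * (Wa * Wb n hn)) : Matrix (Fin 2) (Fin 2) ℝ)
    = !![((n:ℝ)^2+3*n+4)/n, (n:ℝ)+2; -((n:ℝ)+2)/n, -1] := by
  have hne := hNne n hn
  rw [Matrix.SpecialLinearGroup.coe_mul, hP n hn, smul_mul_smul_comm, hss]
  ext i j
  fin_cases i <;> fin_cases j <;>
    (simp [Matrix.mul_apply, Fin.sum_univ_two]; (try field_simp); (try ring))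

lemma hQ2 : (↑((Wa * Wc n hn) * (Wa * Wc n hn)) : Matrix (Fin 2) (Fin 2) ℝ)
    = !![((n:ℝ)+4)/n, -((n:ℝ)+2); -((n:ℝ)+2)/n, (n:ℝ)+1] := by
  have hne := hNne n hn
  have h1s : (1 / Real.sqrt n) * (1 / Real.sqrt n) = 1 / (n:ℝ) := by
    rw [div_mul_div_comm, one_mul, hss]
  rw [Matrix.SpecialLinearGroup.coe_mul, hQ n hn, smul_mul_smul_comm, h1s]
  ext i j
  fin_cases i <;> fin_cases j <;>
    (simp [Matrix.mul_apply, Fin.sum_univ_two]; (try field_simp); (try ring))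

lemma hT : (↑(Wa * Wb n hn * Wc n hn) : Matrix (Fin 2) (Fin 2) ℝ)
    = !![(1:ℝ), -((n:ℝ)+2); 0, 1] := by
  have hne := hNne n hn
  have h1 : Real.sqrt n * (1 / Real.sqrt n) = 1 := by
    rw [mul_one_div, div_self (hsne n hn)]
  rw [Matrix.SpecialLinearGroup.coe_mul, hP n hn, hWcval, smul_mul_smul_comm, h1, one_smul]
  ext i j
  fin_cases i <;> fin_cases j <;>
    (simp [Matrix.mul_apply, Fin.sum_univ_two]; try field_simp)

lemma hR : (↑(Wa * Wc n hn * Wb n hn) : Matrix (Fin 2) (Fin 2) ℝ)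
    = !![-((n:ℝ)+3), -((n:ℝ)+2); (n:ℝ)+2, (n:ℝ)+1] := by
  have hne := hNne n hn
  have h1 : (1 / Real.sqrt n) * Real.sqrt n = 1 := by
    rw [one_div, inv_mul_cancel₀ (hsne n hn)]
  rw [Matrix.SpecialLinearGroup.coe_mul, hQ n hn, hWbval, smul_mul_smul_comm, h1, one_smul]
  ext i j
  fin_cases i <;> fin_cases j <;>
    (simp [Matrix.mul_apply, Fin.sum_univ_two]; (try field_simp); (try ring))

lemma shear_pow (t : ℝ) (k : ℕ) :
    (!![(1:ℝ), t; 0, 1]) ^ k = !![1, (k:ℝ)*t; 0, 1] := by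
  induction k with
  | zero => simp [Matrix.one_fin_two]
  | succ k ih =>
      rw [pow_succ, ih, Matrix.mul_fin_two]
      ext i j
      fin_cases i <;> fin_cases j <;> (simp; (try push_cast); (try ring))

lemma hTpow (k : ℕ) : (↑((Wa * Wb n hn * Wc n hn) ^ k) : Matrix (Fin 2) (Fin 2) ℝ)
    = !![(1:ℝ), (k:ℝ) * (-((n:ℝ)+2)); 0, 1] := by
  rw [Matrix.SpecialLinearGroup.coe_pow, hT n hn, shear_pow]

lemma hTinv : (↑((Wa * Wb n hn * Wc n hn)⁻¹) : Matrix (Fin 2) (Fin 2) ℝ)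
    = !![(1:ℝ), (n:ℝ)+2; 0, 1] := by
  rw [Matrix.SpecialLinearGroup.coe_inv, hT n hn, Matrix.adjugate_fin_two]
  ext i j
  fin_cases i <;> fin_cases j <;> simp

lemma hTinvpow (k : ℕ) : (↑(((Wa * Wb n hn * Wc n hn)⁻¹) ^ k) : Matrix (Fin 2) (Fin 2) ℝ)
    = !![(1:ℝ), (k:ℝ) * ((n:ℝ)+2); 0, 1] := by
  rw [Matrix.SpecialLinearGroup.coe_pow, hTinv n hn, shear_pow]

end helper


set_option maxHeartbeats 2000000 in
/-- For every `n > 2` with `n ≡ 0, 2, 6 (mod 8)`, the Weierstrass group `W_n`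
contains a special element: a hyperbolic element fixing a rational boundary point. -/
theorem weierstrass_contains_special (n : ℕ) (hn : 2 < n)
    (h : n % 8 = 0 ∨ n % 8 = 2 ∨ n % 8 = 6) :
    ∃ γ ∈ W n (by omega), IsHyperbolic γ ∧ ∃ x : ℚ, FixesBoundary γ (x : ℝ) := by
  have hp : 0 < n := by omega
  have haW : Wa ∈ W n hp := Subgroup.subset_closure (by simp)
  have hbW : Wb n hp ∈ W n hp := Subgroup.subset_closure (by simp)
  have hcW : Wc n hp ∈ W n hp := Subgroup.subset_closure (by simp)
  rcases h with h8 | h8 | h8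
  · -- Case A : n = 8 m, m ≥ 1
    obtain ⟨m, rfl⟩ : ∃ m, n = 8 * m := ⟨n / 8, by omega⟩
    have hm1 : 1 ≤ m := by omega
    have he1 : (1:ℝ) ≤ (m:ℝ) := by exact_mod_cast hm1
    have hepos : (0:ℝ) < (m:ℝ) := by linarith
    have he0 : (m:ℝ) ≠ 0 := ne_of_gt hepos
    set g : SL2R := ((Wa * Wb (8*m) hp * Wc (8*m) hp)⁻¹) ^ (m+1) *
        ((Wa * Wb (8*m) hp) * (Wa * Wb (8*m) hp) *
         ((Wa * Wc (8*m) hp) * (Wa * Wc (8*m) hp))) with hg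
    have hval : (↑g : Matrix (Fin 2) (Fin 2) ℝ) =
        !![-(16*(m:ℝ)^2+12*(m:ℝ)+3)/(4*(m:ℝ)), 24*(m:ℝ)^2+18*(m:ℝ)+3;
           -(4*(m:ℝ)+1)/(8*(m:ℝ)^2), (6*(m:ℝ)+1)/(2*(m:ℝ))] := by
      rw [hg, Matrix.SpecialLinearGroup.coe_mul, Matrix.SpecialLinearGroup.coe_mul,
          hTinvpow _ hp, hP2 _ hp, hQ2 _ hp]
      ext i j
      fin_cases i <;> fin_cases j <;>
        (simp [Matrix.mul_apply, Fin.sum_univ_two]; push_cast; field_simp; ring)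
    refine ⟨g, ?_, ?_, 6*(m:ℚ), ?_⟩
    · exact mul_mem (pow_mem (inv_mem (mul_mem (mul_mem haW hbW) hcW)) _)
        (mul_mem (mul_mem (mul_mem haW hbW) (mul_mem haW hbW))
          (mul_mem (mul_mem haW hcW) (mul_mem haW hcW)))
    · unfold _root_.IsHyperbolic
      have htr : Matrix.trace (↑g : Matrix (Fin 2) (Fin 2) ℝ)
          = -((16*(m:ℝ)^2+1)/(4*(m:ℝ))) := by
        rw [hval, Matrix.trace_fin_two]
        norm_num
        field_simp
        ring
      rw [htr, abs_neg, abs_of_pos (by positivity), lt_div_iff₀ (by positivity)]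
      nlinarith [sq_nonneg (4*(m:ℝ)-1), he1]
    · refine ⟨-(1/(4*(m:ℝ))), ?_, ?_⟩
      · have h1 : (0:ℝ) < 1/(4*(m:ℝ)) := by positivity
        exact neg_ne_zero.mpr (ne_of_gt h1)
      · rw [hval]
        funext i
        fin_cases i <;>
          (simp [Matrix.mulVec, dotProduct, Fin.sum_univ_two];
           push_cast; field_simp; ring)
  · -- Case C : n = 8 m + 2, m ≥ 1
    obtain ⟨m, rfl⟩ : ∃ m, n = 8 * m + 2 := ⟨n / 8, by omega⟩
    have hm1 : 1 ≤ m := by omega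
    have he1 : (1:ℝ) ≤ (m:ℝ) := by exact_mod_cast hm1
    have hepos : (0:ℝ) < (m:ℝ) := by linarith
    have he0 : (m:ℝ) ≠ 0 := ne_of_gt hepos
    have h82 : ((8:ℝ)*(m:ℝ)+2) ≠ 0 := by positivity
    have h1le : 1 ≤ 2*m*m := by nlinarith
    set g : SL2R := (Wa * Wb (8*m+2) hp * Wc (8*m+2) hp) ^ (2*m*m-1) *
        (((Wa * Wb (8*m+2) hp) * (Wa * Wb (8*m+2) hp)) *
         ((Wa * Wc (8*m+2) hp * Wb (8*m+2) hp) *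
          ((Wa * Wc (8*m+2) hp) * (Wa * Wc (8*m+2) hp)))) with hg
    have hval : (↑g : Matrix (Fin 2) (Fin 2) ℝ) =
        !![(-1024*(m:ℝ)^4-1024*(m:ℝ)^3-64*(m:ℝ)^2+160*(m:ℝ)+28)/(8*(m:ℝ)+2)^2,
           (640*(m:ℝ)^4+608*(m:ℝ)^3+16*(m:ℝ)^2-96*(m:ℝ)-16)/(8*(m:ℝ)+2);
           (64*(m:ℝ)+32)/(8*(m:ℝ)+2)^2, -(40*(m:ℝ)+18)/(8*(m:ℝ)+2)] := by
      rw [hg, Matrix.SpecialLinearGroup.coe_mul, Matrix.SpecialLinearGroup.coe_mul,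
          hP2 _ hp, Matrix.SpecialLinearGroup.coe_mul, hR _ hp, hQ2 _ hp, hTpow _ hp]
      ext i j
      fin_cases i <;> fin_cases j <;>
        (simp [Matrix.mul_apply, Fin.sum_univ_two];
         push_cast [Nat.cast_sub h1le]; field_simp; ring)
    refine ⟨g, ?_, ?_, 5*(m:ℚ)+1, ?_⟩
    · exact mul_mem (pow_mem (mul_mem (mul_mem haW hbW) hcW) _)
        (mul_mem (mul_mem (mul_mem haW hbW) (mul_mem haW hbW))
          (mul_mem (mul_mem (mul_mem haW hcW) hbW)
            (mul_mem (mul_mem haW hcW) (mul_mem haW hcW))))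
    · unfold _root_.IsHyperbolic
      have htr : Matrix.trace (↑g : Matrix (Fin 2) (Fin 2) ℝ)
          = -(((4*(m:ℝ)+1)^4+1)/((4*(m:ℝ)+1)^2)) := by
        rw [hval, Matrix.trace_fin_two]
        norm_num
        field_simp
        ring
      rw [htr, abs_neg, abs_of_pos (by positivity), lt_div_iff₀ (by positivity)]
      nlinarith [sq_nonneg ((4*(m:ℝ)+1)^2-3), he1]
    · refine ⟨-(1/((4*(m:ℝ)+1)^2)), ?_, ?_⟩
      · have h1 : (0:ℝ) < 1/((4*(m:ℝ)+1)^2) := by positivity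
        exact neg_ne_zero.mpr (ne_of_gt h1)
      · rw [hval]
        funext i
        fin_cases i <;>
          (simp [Matrix.mulVec, dotProduct, Fin.sum_univ_two];
           push_cast; field_simp; ring)
  · -- Case B : n = 8 m + 6, m ≥ 0
    obtain ⟨m, rfl⟩ : ∃ m, n = 8 * m + 6 := ⟨n / 8, by omega⟩
    have he1 : (0:ℝ) ≤ (m:ℝ) := Nat.cast_nonneg m
    have h86 : ((8:ℝ)*(m:ℝ)+6) ≠ 0 := by positivity
    set g : SL2R := ((Wa * Wb (8*m+6) hp) * (Wa * Wb (8*m+6) hp)) *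
        ((Wa * Wc (8*m+6) hp) *
         ((Wa * Wb (8*m+6) hp * Wc (8*m+6) hp) ^ m * (Wa * Wc (8*m+6) hp))) with hg
    have hval : (↑g : Matrix (Fin 2) (Fin 2) ℝ) =
        !![(512*(m:ℝ)^4+1536*(m:ℝ)^3+1760*(m:ℝ)^2+928*(m:ℝ)+196)/(8*(m:ℝ)+6)^2,
           -(512*(m:ℝ)^4+1536*(m:ℝ)^3+1696*(m:ℝ)^2+800*(m:ℝ)+128)/(8*(m:ℝ)+6);
           -(64*(m:ℝ)^3+144*(m:ℝ)^2+112*(m:ℝ)+32)/(8*(m:ℝ)+6)^2,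
           (64*(m:ℝ)^3+144*(m:ℝ)^2+104*(m:ℝ)+22)/(8*(m:ℝ)+6)] := by
      rw [hg, Matrix.SpecialLinearGroup.coe_mul, hP2 _ hp,
          Matrix.SpecialLinearGroup.coe_mul, hQ _ hp,
          Matrix.SpecialLinearGroup.coe_mul, hTpow _ hp, hQ _ hp]
      simp only [mul_smul_comm, smul_mul_assoc, smul_smul]
      rw [div_mul_div_comm, one_mul, hss]
      ext i j
      fin_cases i <;> fin_cases j <;>
        (simp [Matrix.mul_apply, Fin.sum_univ_two, Matrix.smul_apply, smul_eq_mul];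
         push_cast; field_simp; ring)
    refine ⟨g, ?_, ?_, -(8*(m:ℚ)+6), ?_⟩
    · exact mul_mem (mul_mem (mul_mem haW hbW) (mul_mem haW hbW))
        (mul_mem (mul_mem haW hcW)
          (mul_mem (pow_mem (mul_mem (mul_mem haW hbW) hcW) _) (mul_mem haW hcW)))
    · unfold _root_.IsHyperbolic
      have htr : Matrix.trace (↑g : Matrix (Fin 2) (Fin 2) ℝ)
          = ((4*(m:ℝ)+3)^4+1)/((4*(m:ℝ)+3)^2) := by
        rw [hval, Matrix.trace_fin_two]
        norm_num
        field_simp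
        ring
      rw [htr, abs_of_pos (by positivity), lt_div_iff₀ (by positivity)]
      nlinarith [sq_nonneg ((4*(m:ℝ)+3)^2-3), he1]
    · refine ⟨(4*(m:ℝ)+3)^2, ?_, ?_⟩
      · positivity
      · rw [hval]
        funext i
        fin_cases i <;>
          (simp [Matrix.mulVec, dotProduct, Fin.sum_univ_two];
           push_cast; field_simp; ring)
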